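/- Let N be a 3-prime zero-symmetric left near-ring and d a multiplicative derivation of N such that d(xy) = d(x)·d(y) for all x, y ∈ N. Then d = 0. -/
import Mathlib


class LeftNearRing (N : Type*) extends AddGroup N, Mul N where
  mul_assoc : ∀ a b c : N, a * b * c = a * (b * c)
  left_distrib : ∀ a b c : N, a * (b + c) = a * b + a * c

theorem stmt6 {N : Type*} [LeftNearRing N] (hN : ∃ x : N, x ≠ 0)
    (hzs : ∀ x : N, 0 * x = 0)
    (hp : ∀ a b : N, (∀ n : N, a * n * b = 0) → a = 0 ∨ b = 0)
    (d : N → N) (hd : ∀ x y : N, d (x * y) = x * d y + d x * y)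
    (hh : ∀ x y : N, d (x * y) = d x * d y) :
    ∀ x : N, d x = 0 := by
  have massoc := LeftNearRing.mul_assoc (N := N)
  have ldist := LeftNearRing.left_distrib (N := N)
  -- a * 0 = 0
  have mz : ∀ a : N, a * 0 = 0 := by
    intro a
    have h : a * 0 + a * 0 = a * 0 + 0 := by
      rw [← ldist, add_zero, add_zero]
    exact add_left_cancel h
  -- a * (-b) = -(a*b)
  have mneg : ∀ a b : N, a * (-b) = -(a * b) := by
    intro a b
    have h : a * b + a * (-b) = 0 := by
      rw [← ldist, add_neg_cancel, mz]
    exact eq_neg_of_add_eq_zero_right h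
  have msub : ∀ a b c : N, a * (b - c) = a * b - a * c := by
    intro a b c
    rw [sub_eq_add_neg, ldist, mneg, ← sub_eq_add_neg]
  -- key identity (A): d x * (d y - y) = x * d y
  have hA : ∀ x y : N, d x * (d y - y) = x * d y := by
    intro x y
    have h1 : x * d y + d x * y = d x * d y := by rw [← hd, hh]
    rw [msub]
    exact (eq_sub_of_add_eq h1).symm
  -- (R): d x * n * d y = x * n * d y
  have hR : ∀ x n y : N, d x * n * d y = x * n * d y := by
    intro x n y
    have h1 := hA (x * n) y
    rw [hh, massoc, hA n y, ← massoc] at h1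
    rw [h1, massoc x n (d y)]
  -- key: d x * (y * w) = 0
  have key : ∀ x y w : N, d x * y * w = 0 := by
    intro x y w
    have h1 := hA x (y * w)
    rw [hh, msub, ← massoc, hR x (d y) w, massoc x (d y) (d w)] at h1
    have h2 : d x * (y * w) = 0 := by
      have := sub_eq_self.mp h1
      exact this
    rw [massoc]
    exact h2
  intro x
  obtain ⟨w, hw⟩ := hN
  rcases hp (d x) w (fun n => key x n w) with h | h
  · exact h
  · exact absurd h hw
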